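/- Let Ỹ(1,π₂), Ỹ(0,0) be square-integrable random variables, S a conditioning variable, ψ a square-integrable random vector with E[Var[ψ|S]] nonsingular, and π₁ ∈ (0,1), E[N] > 0. Define β = π₁(1−π₁)(E[Var[ψ|S]])^{-1} E[Cov[(1/π₁)Ỹ(1,π₂) + (1/(1−π₁))Ỹ(0,0), ψ | S]]·E[N], and Y*(z,h) = Ỹ(z,h) − (ψ − E[ψ])'β/E[N]. Let V(A) = (1/π₁)Var[A(1,π₂)] + (1/(1−π₁))Var[A(0,0)] − π₁(1−π₁)E[((1/π₁)E[A(1,π₂)|S] + (1/(1−π₁))E[A(0,0)|S])²] (with the conditional means centered). Then V(Y*) = V(Ỹ) − κ², where κ² = (1/(π₁(1−π₁)))·(1/E[N]²)·E[Var[ψ'β | S]] ≥ 0. In particular V(Y*) ≤ V(Ỹ). -/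

import Mathlib

open MeasureTheory ProbabilityTheory Matrix

/-- `E[Var[ψ | S]]`: the expected conditional covariance matrix of the random vector
`ψ` given the σ-algebra `m`. -/
noncomputable def condCovMat {Ω : Type*} {mΩ : MeasurableSpace Ω} (μ : Measure Ω)
    (m : MeasurableSpace Ω) {d : ℕ} (ψ : Ω → Fin d → ℝ) : Matrix (Fin d) (Fin d) ℝ :=
  Matrix.of fun i j =>
    ∫ ω, (ψ ω i - (μ[fun ω => ψ ω i|m]) ω) * (ψ ω j - (μ[fun ω => ψ ω j|m]) ω) ∂μ

/-- `E[Cov[W, ψ | S]]`: the expected conditional covariance of `W` with the coordinates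
of `ψ` given the σ-algebra `m`. -/
noncomputable def condCovVec {Ω : Type*} {mΩ : MeasurableSpace Ω} (μ : Measure Ω)
    (m : MeasurableSpace Ω) {d : ℕ} (W : Ω → ℝ) (ψ : Ω → Fin d → ℝ) : Fin d → ℝ :=
  fun i => ∫ ω, (W ω - (μ[W|m]) ω) * (ψ ω i - (μ[fun ω => ψ ω i|m]) ω) ∂μ

/-- The asymptotic variance functional `V` (with centered conditional means). -/
noncomputable def Vnotau {Ω : Type*} {mΩ : MeasurableSpace Ω} (μ : Measure Ω)
    (m : MeasurableSpace Ω) (π₁ : ℝ) (A1 A0 : Ω → ℝ) : ℝ :=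
  (1/π₁) * variance A1 μ + (1/(1-π₁)) * variance A0 μ
    - π₁*(1-π₁) * ∫ ω, ((1/π₁) * ((μ[A1|m]) ω - ∫ x, A1 x ∂μ)
        + (1/(1-π₁)) * ((μ[A0|m]) ω - ∫ x, A0 x ∂μ))^2 ∂μ


set_option linter.unusedSectionVars false
set_option maxHeartbeats 1000000

section Helpers


variable {Ω : Type*} {mΩ : MeasurableSpace Ω} {μ : Measure Ω} [IsProbabilityMeasure μ]
  {m : MeasurableSpace Ω} {f g h : Ω → ℝ}

lemma integrable_mul_of_memℒp_two (hf : MemLp f 2 μ) (hg : MemLp g 2 μ) :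
    Integrable (fun ω => f ω * g ω) μ := by
  have h := hg.smul (φ := f) hf (p := 2) (q := 2) (r := 1)
  exact memLp_one_iff_integrable.mp h

lemma memℒp_two_condexp (hm : m ≤ mΩ) (hf : MemLp f 2 μ) : MemLp (μ[f|m]) 2 μ := by
  have hfi : Integrable f μ := hf.integrable one_le_two
  set fL : Lp ℝ 2 μ := hf.toLp f with hfL
  have heq : μ[f|m] =ᵐ[μ] (condExpL2 ℝ ℝ hm fL : Ω → ℝ) := by
    refine (ae_eq_condExp_of_forall_setIntegral_eq hm hfi ?_ ?_ ?_).symm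
    · intro s hs hμs
      exact integrableOn_condExpL2_of_measure_ne_top hm hμs.ne fL
    · intro s hs hμs
      rw [integral_condExpL2_eq hm fL hs hμs.ne]
      exact integral_congr_ae (ae_restrict_of_ae hf.coeFn_toLp)
    · exact aestronglyMeasurable_condExpL2 hm fL
  exact ((Lp.memLp ((condExpL2 ℝ ℝ hm fL : Lp ℝ 2 μ)))).ae_eq heq.symm

lemma integral_mul_condexp_left (hm : m ≤ mΩ) (hmeas : StronglyMeasurable[m] h)
    (hh : MemLp h 2 μ) (hg : MemLp g 2 μ) :
    ∫ ω, h ω * g ω ∂μ = ∫ ω, h ω * (μ[g|m]) ω ∂μ := by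
  have hmul : Integrable (fun ω => h ω * g ω) μ := integrable_mul_of_memℒp_two hh hg
  have hgi : Integrable g μ := hg.integrable one_le_two
  have hpull : μ[(fun ω => h ω * g ω)|m] =ᵐ[μ] fun ω => h ω * (μ[g|m]) ω :=
    condExp_mul_of_stronglyMeasurable_left hmeas hmul hgi
  calc ∫ ω, h ω * g ω ∂μ = ∫ ω, (μ[(fun ω => h ω * g ω)|m]) ω ∂μ :=
        (integral_condExp hm).symm
    _ = ∫ ω, h ω * (μ[g|m]) ω ∂μ := integral_congr_ae hpull

/-- `E[Cov[f,g|m]] = E[fg] - E[E[f|m]E[g|m]]`. -/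
lemma integral_condcov_eq (hm : m ≤ mΩ) (hf : MemLp f 2 μ) (hg : MemLp g 2 μ) :
    ∫ ω, (f ω - (μ[f|m]) ω) * (g ω - (μ[g|m]) ω) ∂μ
      = ∫ ω, f ω * g ω ∂μ - ∫ ω, (μ[f|m]) ω * (μ[g|m]) ω ∂μ := by
  have hcf : MemLp (μ[f|m]) 2 μ := memℒp_two_condexp hm hf
  have hcg : MemLp (μ[g|m]) 2 μ := memℒp_two_condexp hm hg
  have i1 : Integrable (fun ω => f ω * g ω) μ := integrable_mul_of_memℒp_two hf hg
  have i2 : Integrable (fun ω => f ω * (μ[g|m]) ω) μ := integrable_mul_of_memℒp_two hf hcg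
  have i3 : Integrable (fun ω => (μ[f|m]) ω * g ω) μ := integrable_mul_of_memℒp_two hcf hg
  have i4 : Integrable (fun ω => (μ[f|m]) ω * (μ[g|m]) ω) μ :=
    integrable_mul_of_memℒp_two hcf hcg
  have t1 : ∫ ω, f ω * (μ[g|m]) ω ∂μ = ∫ ω, (μ[f|m]) ω * (μ[g|m]) ω ∂μ := by
    calc ∫ ω, f ω * (μ[g|m]) ω ∂μ = ∫ ω, (μ[g|m]) ω * f ω ∂μ := by
          apply integral_congr_ae; filter_upwards with ω using mul_comm _ _
      _ = ∫ ω, (μ[g|m]) ω * (μ[f|m]) ω ∂μ :=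
          integral_mul_condexp_left hm stronglyMeasurable_condExp hcg hf
      _ = ∫ ω, (μ[f|m]) ω * (μ[g|m]) ω ∂μ := by
          apply integral_congr_ae; filter_upwards with ω using mul_comm _ _
  have t2 : ∫ ω, (μ[f|m]) ω * g ω ∂μ = ∫ ω, (μ[f|m]) ω * (μ[g|m]) ω ∂μ :=
    integral_mul_condexp_left hm stronglyMeasurable_condExp hcf hg
  have expand : ∫ ω, (f ω - (μ[f|m]) ω) * (g ω - (μ[g|m]) ω) ∂μ
      = ∫ ω, f ω * g ω ∂μ - ∫ ω, f ω * (μ[g|m]) ω ∂μ - (∫ ω, (μ[f|m]) ω * g ω ∂μ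
        - ∫ ω, (μ[f|m]) ω * (μ[g|m]) ω ∂μ) := by
    have e1 : (fun ω => (f ω - (μ[f|m]) ω) * (g ω - (μ[g|m]) ω))
        = fun ω => (f ω * g ω - f ω * (μ[g|m]) ω)
            - ((μ[f|m]) ω * g ω - (μ[f|m]) ω * (μ[g|m]) ω) := by funext ω; ring
    calc ∫ ω, (f ω - (μ[f|m]) ω) * (g ω - (μ[g|m]) ω) ∂μ
        = ∫ ω, (f ω * g ω - f ω * (μ[g|m]) ω)
            - ((μ[f|m]) ω * g ω - (μ[f|m]) ω * (μ[g|m]) ω) ∂μ := by rw [e1]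
      _ = (∫ ω, f ω * g ω - f ω * (μ[g|m]) ω ∂μ)
            - ∫ ω, (μ[f|m]) ω * g ω - (μ[f|m]) ω * (μ[g|m]) ω ∂μ :=
          integral_sub (i1.sub i2) (i3.sub i4)
      _ = (∫ ω, f ω * g ω ∂μ - ∫ ω, f ω * (μ[g|m]) ω ∂μ)
            - ∫ ω, (μ[f|m]) ω * g ω - (μ[f|m]) ω * (μ[g|m]) ω ∂μ := by
          rw [integral_sub i1 i2]
      _ = _ := by rw [integral_sub i3 i4]
  rw [expand, t1, t2]; ring

/-- `E[(E[f|m]-Ef)(E[g|m]-Eg)] = E[E[f|m]E[g|m]] - Ef·Eg`. -/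
lemma integral_condexp_centered_mul (hm : m ≤ mΩ) (hf : MemLp f 2 μ) (hg : MemLp g 2 μ) :
    ∫ ω, ((μ[f|m]) ω - ∫ x, f x ∂μ) * ((μ[g|m]) ω - ∫ x, g x ∂μ) ∂μ
      = ∫ ω, (μ[f|m]) ω * (μ[g|m]) ω ∂μ - (∫ x, f x ∂μ) * ∫ x, g x ∂μ := by
  have hcf : MemLp (μ[f|m]) 2 μ := memℒp_two_condexp hm hf
  have hcg : MemLp (μ[g|m]) 2 μ := memℒp_two_condexp hm hg
  have i4 : Integrable (fun ω => (μ[f|m]) ω * (μ[g|m]) ω) μ :=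
    integrable_mul_of_memℒp_two hcf hcg
  have icf : Integrable (μ[f|m]) μ := integrable_condExp
  have icg : Integrable (μ[g|m]) μ := integrable_condExp
  have ef : ∫ ω, (μ[f|m]) ω ∂μ = ∫ x, f x ∂μ := integral_condExp hm
  have eg : ∫ ω, (μ[g|m]) ω ∂μ = ∫ x, g x ∂μ := integral_condExp hm
  have expand : ∫ ω, ((μ[f|m]) ω - ∫ x, f x ∂μ) * ((μ[g|m]) ω - ∫ x, g x ∂μ) ∂μ
      = ∫ ω, (μ[f|m]) ω * (μ[g|m]) ω ∂μ - (∫ x, f x ∂μ) * ∫ ω, (μ[g|m]) ω ∂μ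
        - ((∫ x, g x ∂μ) * ∫ ω, (μ[f|m]) ω ∂μ
          - (∫ x, f x ∂μ) * ((∫ x, g x ∂μ) * ∫ ω, (1:ℝ) ∂μ)) := by
    have e1 : (fun ω => ((μ[f|m]) ω - ∫ x, f x ∂μ) * ((μ[g|m]) ω - ∫ x, g x ∂μ))
        = fun ω => ((μ[f|m]) ω * (μ[g|m]) ω - (∫ x, f x ∂μ) * (μ[g|m]) ω)
            - ((∫ x, g x ∂μ) * (μ[f|m]) ω
              - (∫ x, f x ∂μ) * ((∫ x, g x ∂μ) * (1:ℝ))) := by funext ω; ring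
    calc ∫ ω, ((μ[f|m]) ω - ∫ x, f x ∂μ) * ((μ[g|m]) ω - ∫ x, g x ∂μ) ∂μ
        = ∫ ω, ((μ[f|m]) ω * (μ[g|m]) ω - (∫ x, f x ∂μ) * (μ[g|m]) ω)
            - ((∫ x, g x ∂μ) * (μ[f|m]) ω
              - (∫ x, f x ∂μ) * ((∫ x, g x ∂μ) * (1:ℝ))) ∂μ := by rw [e1]
      _ = (∫ ω, (μ[f|m]) ω * (μ[g|m]) ω - (∫ x, f x ∂μ) * (μ[g|m]) ω ∂μ)
            - ∫ ω, (∫ x, g x ∂μ) * (μ[f|m]) ω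
              - (∫ x, f x ∂μ) * ((∫ x, g x ∂μ) * (1:ℝ)) ∂μ :=
          integral_sub (i4.sub (icg.const_mul _))
            ((icf.const_mul _).sub (((integrable_const (1:ℝ)).const_mul _).const_mul _))
      _ = (∫ ω, (μ[f|m]) ω * (μ[g|m]) ω ∂μ - ∫ ω, (∫ x, f x ∂μ) * (μ[g|m]) ω ∂μ)
            - (∫ ω, (∫ x, g x ∂μ) * (μ[f|m]) ω ∂μ
              - ∫ ω, (∫ x, f x ∂μ) * ((∫ x, g x ∂μ) * (1:ℝ)) ∂μ) := by
          rw [integral_sub i4 (icg.const_mul _),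
            integral_sub (icf.const_mul _) (((integrable_const (1:ℝ)).const_mul _).const_mul _)]
      _ = _ := by rw [integral_const_mul, integral_const_mul, integral_const_mul,
            integral_const_mul]
  rw [expand, ef, eg]
  simp [integral_const]
  ring

/-- Expansion of `∫ (U - c·V)²`. -/
lemma integral_sub_smul_sq (hU : MemLp f 2 μ) (hV : MemLp g 2 μ) (c : ℝ) :
    ∫ ω, (f ω - c * g ω)^2 ∂μ
      = ∫ ω, (f ω)^2 ∂μ - 2*c*∫ ω, f ω * g ω ∂μ + c^2 * ∫ ω, (g ω)^2 ∂μ := by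
  have iU2 : Integrable (fun ω => (f ω)^2) μ := by
    simpa [pow_two] using integrable_mul_of_memℒp_two hU hU
  have iV2 : Integrable (fun ω => (g ω)^2) μ := by
    simpa [pow_two] using integrable_mul_of_memℒp_two hV hV
  have iUV : Integrable (fun ω => f ω * g ω) μ := integrable_mul_of_memℒp_two hU hV
  have e1 : (fun ω => (f ω - c * g ω)^2)
      = fun ω => ((f ω)^2 - (2*c) * (f ω * g ω)) + c^2 * (g ω)^2 := by funext ω; ring
  calc ∫ ω, (f ω - c * g ω)^2 ∂μ
      = ∫ ω, ((f ω)^2 - (2*c) * (f ω * g ω)) + c^2 * (g ω)^2 ∂μ := by rw [e1]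
    _ = (∫ ω, (f ω)^2 - (2*c) * (f ω * g ω) ∂μ) + ∫ ω, c^2 * (g ω)^2 ∂μ :=
        integral_add (iU2.sub (iUV.const_mul _)) (iV2.const_mul _)
    _ = (∫ ω, (f ω)^2 ∂μ - ∫ ω, (2*c) * (f ω * g ω) ∂μ) + ∫ ω, c^2 * (g ω)^2 ∂μ := by
        rw [integral_sub iU2 (iUV.const_mul _)]
    _ = _ := by rw [integral_const_mul, integral_const_mul]

lemma variance_eq_integral_sq (hX : MemLp f 2 μ) :
    variance f μ = ∫ ω, (f ω)^2 ∂μ - (∫ ω, f ω ∂μ)^2 := by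
  rw [variance_eq_sub hX]; rfl

lemma integral_sub_sq' (hU : MemLp f 2 μ) (hV : MemLp g 2 μ) :
    ∫ ω, (f ω - g ω)^2 ∂μ
      = ∫ ω, (f ω)^2 ∂μ - 2*∫ ω, f ω * g ω ∂μ + ∫ ω, (g ω)^2 ∂μ := by
  have := integral_sub_smul_sq hU hV 1
  simpa using this

lemma Vnotau_sub (hm : m ≤ mΩ) {π₁ : ℝ} (hπ : π₁ ∈ Set.Ioo (0:ℝ) 1)
    (X1 X0 g : Ω → ℝ) (h1 : MemLp X1 2 μ) (h0 : MemLp X0 2 μ) (hg : MemLp g 2 μ) :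
    Vnotau μ m π₁ (fun ω => X1 ω - g ω) (fun ω => X0 ω - g ω)
      = Vnotau μ m π₁ X1 X0
        - 2 * ∫ ω, ((1/π₁) * X1 ω + (1/(1-π₁)) * X0 ω
            - (μ[fun ω => (1/π₁) * X1 ω + (1/(1-π₁)) * X0 ω|m]) ω) * (g ω - (μ[g|m]) ω) ∂μ
        + (1/(π₁*(1-π₁))) * ∫ ω, (g ω - (μ[g|m]) ω)^2 ∂μ := by
  obtain ⟨hπ0, hπ1⟩ := hπ
  have hπ1' : 0 < 1 - π₁ := by linarith
  have iX1 : Integrable X1 μ := h1.integrable one_le_two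
  have iX0 : Integrable X0 μ := h0.integrable one_le_two
  have ig : Integrable g μ := hg.integrable one_le_two
  have hc1 : MemLp (μ[X1|m]) 2 μ := memℒp_two_condexp hm h1
  have hc0 : MemLp (μ[X0|m]) 2 μ := memℒp_two_condexp hm h0
  have hcg : MemLp (μ[g|m]) 2 μ := memℒp_two_condexp hm hg
  set a := 1/π₁ with ha
  set b := 1/(1-π₁) with hb
  have hW : MemLp (fun ω => a * X1 ω + b * X0 ω) 2 μ :=
    (h1.const_mul a).add (h0.const_mul b)
  -- centered conditional expectations
  have ceY1 : μ[fun ω => X1 ω - g ω|m] =ᵐ[μ] fun ω => (μ[X1|m]) ω - (μ[g|m]) ω :=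
    condExp_sub iX1 ig m
  have ceY0 : μ[fun ω => X0 ω - g ω|m] =ᵐ[μ] fun ω => (μ[X0|m]) ω - (μ[g|m]) ω :=
    condExp_sub iX0 ig m
  have ceW : μ[fun ω => a * X1 ω + b * X0 ω|m]
      =ᵐ[μ] fun ω => a * (μ[X1|m]) ω + b * (μ[X0|m]) ω := by
    have hA := condExp_add (μ := μ) (m := m) (iX1.const_mul a) (iX0.const_mul b)
    have hB := condExp_smul (μ := μ) (m := m) a X1
    have hC := condExp_smul (μ := μ) (m := m) b X0
    exact hA.trans (hB.add hC)
  -- integrals of differences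
  have EY1g : ∫ x, X1 x - g x ∂μ = ∫ x, X1 x ∂μ - ∫ x, g x ∂μ := integral_sub iX1 ig
  have EY0g : ∫ x, X0 x - g x ∂μ = ∫ x, X0 x ∂μ - ∫ x, g x ∂μ := integral_sub iX0 ig
  -- variance expansions
  have hv1 : variance (fun ω => X1 ω - g ω) μ
      = (∫ ω, (X1 ω)^2 ∂μ - 2*∫ ω, X1 ω * g ω ∂μ + ∫ ω, (g ω)^2 ∂μ)
        - (∫ x, X1 x ∂μ - ∫ x, g x ∂μ)^2 := by
    calc variance (fun ω => X1 ω - g ω) μ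
        = ∫ ω, (X1 ω - g ω)^2 ∂μ - (∫ x, X1 x - g x ∂μ)^2 :=
          variance_eq_integral_sq (h1.sub hg)
      _ = _ := by rw [integral_sub_sq' h1 hg, EY1g]
  have hv0 : variance (fun ω => X0 ω - g ω) μ
      = (∫ ω, (X0 ω)^2 ∂μ - 2*∫ ω, X0 ω * g ω ∂μ + ∫ ω, (g ω)^2 ∂μ)
        - (∫ x, X0 x ∂μ - ∫ x, g x ∂μ)^2 := by
    calc variance (fun ω => X0 ω - g ω) μ
        = ∫ ω, (X0 ω - g ω)^2 ∂μ - (∫ x, X0 x - g x ∂μ)^2 :=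
          variance_eq_integral_sq (h0.sub hg)
      _ = _ := by rw [integral_sub_sq' h0 hg, EY0g]
  have hvX1 : variance X1 μ = ∫ ω, (X1 ω)^2 ∂μ - (∫ x, X1 x ∂μ)^2 :=
    variance_eq_integral_sq h1
  have hvX0 : variance X0 μ = ∫ ω, (X0 ω)^2 ∂μ - (∫ x, X0 x ∂μ)^2 :=
    variance_eq_integral_sq h0
  -- centered conditional expectation functions
  set U : Ω → ℝ := fun ω => a * ((μ[X1|m]) ω - ∫ x, X1 x ∂μ)
      + b * ((μ[X0|m]) ω - ∫ x, X0 x ∂μ) with hUdef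
  set ug : Ω → ℝ := fun ω => (μ[g|m]) ω - ∫ x, g x ∂μ with hugdef
  have hU : MemLp U 2 μ :=
    ((hc1.sub (memLp_const _)).const_mul a).add ((hc0.sub (memLp_const _)).const_mul b)
  have hug : MemLp ug 2 μ := hcg.sub (memLp_const _)
  have hstar : ∫ ω, (a * ((μ[fun ω => X1 ω - g ω|m]) ω - ∫ x, X1 x - g x ∂μ)
        + b * ((μ[fun ω => X0 ω - g ω|m]) ω - ∫ x, X0 x - g x ∂μ))^2 ∂μ
      = ∫ ω, (U ω - (a+b) * ug ω)^2 ∂μ := by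
    apply integral_congr_ae
    filter_upwards [ceY1, ceY0] with ω e1 e0
    simp only [e1, e0, EY1g, EY0g, hUdef, hugdef]
    ring
  have hexp : ∫ ω, (U ω - (a+b) * ug ω)^2 ∂μ
      = ∫ ω, (U ω)^2 ∂μ - 2*(a+b)*∫ ω, U ω * ug ω ∂μ + (a+b)^2 * ∫ ω, (ug ω)^2 ∂μ :=
    integral_sub_smul_sq hU hug (a+b)
  have hUug : ∫ ω, U ω * ug ω ∂μ
      = a * (∫ ω, (μ[X1|m]) ω * (μ[g|m]) ω ∂μ - (∫ x, X1 x ∂μ) * ∫ x, g x ∂μ)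
        + b * (∫ ω, (μ[X0|m]) ω * (μ[g|m]) ω ∂μ - (∫ x, X0 x ∂μ) * ∫ x, g x ∂μ) := by
    have i1 : Integrable (fun ω => ((μ[X1|m]) ω - ∫ x, X1 x ∂μ)
        * ((μ[g|m]) ω - ∫ x, g x ∂μ)) μ :=
      integrable_mul_of_memℒp_two (hc1.sub (memLp_const _)) (hcg.sub (memLp_const _))
    have i0 : Integrable (fun ω => ((μ[X0|m]) ω - ∫ x, X0 x ∂μ)
        * ((μ[g|m]) ω - ∫ x, g x ∂μ)) μ :=
      integrable_mul_of_memℒp_two (hc0.sub (memLp_const _)) (hcg.sub (memLp_const _))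
    calc ∫ ω, U ω * ug ω ∂μ
        = ∫ ω, a * (((μ[X1|m]) ω - ∫ x, X1 x ∂μ) * ((μ[g|m]) ω - ∫ x, g x ∂μ))
            + b * (((μ[X0|m]) ω - ∫ x, X0 x ∂μ) * ((μ[g|m]) ω - ∫ x, g x ∂μ)) ∂μ := by
          apply integral_congr_ae; filter_upwards with ω
          simp only [hUdef, hugdef]; ring
      _ = a * ∫ ω, (((μ[X1|m]) ω - ∫ x, X1 x ∂μ) * ((μ[g|m]) ω - ∫ x, g x ∂μ)) ∂μ
          + b * ∫ ω, (((μ[X0|m]) ω - ∫ x, X0 x ∂μ) * ((μ[g|m]) ω - ∫ x, g x ∂μ)) ∂μ := by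
          rw [integral_add (i1.const_mul a) (i0.const_mul b), integral_const_mul,
            integral_const_mul]
      _ = _ := by
          rw [integral_condexp_centered_mul hm h1 hg, integral_condexp_centered_mul hm h0 hg]
  have hug2 : ∫ ω, (ug ω)^2 ∂μ
      = ∫ ω, (μ[g|m]) ω * (μ[g|m]) ω ∂μ - (∫ x, g x ∂μ) * ∫ x, g x ∂μ := by
    calc ∫ ω, (ug ω)^2 ∂μ
        = ∫ ω, ((μ[g|m]) ω - ∫ x, g x ∂μ) * ((μ[g|m]) ω - ∫ x, g x ∂μ) ∂μ := by
          apply integral_congr_ae; filter_upwards with ω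
          simp only [hugdef]; ring
      _ = _ := integral_condexp_centered_mul hm hg hg
  have hDW : ∫ ω, (a * X1 ω + b * X0 ω - (μ[fun ω => a * X1 ω + b * X0 ω|m]) ω)
        * (g ω - (μ[g|m]) ω) ∂μ
      = ∫ ω, (a * X1 ω + b * X0 ω) * g ω ∂μ
        - ∫ ω, (μ[fun ω => a * X1 ω + b * X0 ω|m]) ω * (μ[g|m]) ω ∂μ :=
    integral_condcov_eq hm hW hg
  have hWg : ∫ ω, (a * X1 ω + b * X0 ω) * g ω ∂μ
      = a * ∫ ω, X1 ω * g ω ∂μ + b * ∫ ω, X0 ω * g ω ∂μ := by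
    have i1 := integrable_mul_of_memℒp_two h1 hg
    have i0 := integrable_mul_of_memℒp_two h0 hg
    calc ∫ ω, (a * X1 ω + b * X0 ω) * g ω ∂μ
        = ∫ ω, a * (X1 ω * g ω) + b * (X0 ω * g ω) ∂μ := by
          apply integral_congr_ae; filter_upwards with ω; ring
      _ = _ := by
          rw [integral_add (i1.const_mul a) (i0.const_mul b), integral_const_mul,
            integral_const_mul]
  have hWbar : ∫ ω, (μ[fun ω => a * X1 ω + b * X0 ω|m]) ω * (μ[g|m]) ω ∂μ
      = a * ∫ ω, (μ[X1|m]) ω * (μ[g|m]) ω ∂μ + b * ∫ ω, (μ[X0|m]) ω * (μ[g|m]) ω ∂μ := by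
    have i1 := integrable_mul_of_memℒp_two hc1 hcg
    have i0 := integrable_mul_of_memℒp_two hc0 hcg
    calc ∫ ω, (μ[fun ω => a * X1 ω + b * X0 ω|m]) ω * (μ[g|m]) ω ∂μ
        = ∫ ω, a * ((μ[X1|m]) ω * (μ[g|m]) ω) + b * ((μ[X0|m]) ω * (μ[g|m]) ω) ∂μ := by
          apply integral_congr_ae; filter_upwards [ceW] with ω e
          simp only [e]; ring
      _ = _ := by
          rw [integral_add (i1.const_mul a) (i0.const_mul b), integral_const_mul,
            integral_const_mul]
  have hDg : ∫ ω, (g ω - (μ[g|m]) ω)^2 ∂μ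
      = ∫ ω, (g ω)^2 ∂μ - ∫ ω, (μ[g|m]) ω * (μ[g|m]) ω ∂μ := by
    calc ∫ ω, (g ω - (μ[g|m]) ω)^2 ∂μ
        = ∫ ω, (g ω - (μ[g|m]) ω) * (g ω - (μ[g|m]) ω) ∂μ := by
          apply integral_congr_ae; filter_upwards with ω; ring
      _ = ∫ ω, g ω * g ω ∂μ - ∫ ω, (μ[g|m]) ω * (μ[g|m]) ω ∂μ := integral_condcov_eq hm hg hg
      _ = _ := by
          rw [show ∫ ω, g ω * g ω ∂μ = ∫ ω, (g ω)^2 ∂μ from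
            integral_congr_ae (by filter_upwards with ω; ring)]
  -- final assembly
  have hA : ∫ ω, (a * ((μ[X1|m]) ω - ∫ x, X1 x ∂μ)
      + b * ((μ[X0|m]) ω - ∫ x, X0 x ∂μ))^2 ∂μ = ∫ ω, (U ω)^2 ∂μ := rfl
  simp only [Vnotau]
  rw [← ha, ← hb, hv1, hv0, hvX1, hvX0, hstar, hexp, hUug, hug2, hA, hDW, hWg, hWbar, hDg]
  have hp0 : π₁ ≠ 0 := ne_of_gt hπ0
  have h10 : (1:ℝ) - π₁ ≠ 0 := ne_of_gt hπ1'
  rw [ha, hb]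
  field_simp
  ring

lemma centered_smul_add_const (hm : m ≤ mΩ) (hf : Integrable f μ) (c k : ℝ) :
    (fun ω => (c * f ω + k) - (μ[fun ω => c * f ω + k|m]) ω)
      =ᵐ[μ] fun ω => c * (f ω - (μ[f|m]) ω) := by
  have h1 := condExp_add (μ := μ) (m := m) (hf.const_mul c) (integrable_const k)
  have h2 := condExp_smul (μ := μ) (m := m) c f
  have h3 : μ[(fun _ : Ω => k)|m] = fun _ => k := condExp_const hm k
  filter_upwards [h1, h2] with ω e1 e2
  have e1' : (μ[fun ω => c * f ω + k|m]) ω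
      = (μ[fun ω => c * f ω|m]) ω + (μ[fun _ : Ω => k|m]) ω := e1
  have e2' : (μ[fun ω => c * f ω|m]) ω = c * (μ[f|m]) ω := e2
  simp only [e1', e2', h3]
  ring

end Helpers

/-- Covariate-adjustment variance improvement (Theorem 5.4): with the projection
coefficient `β = π₁(1−π₁)(E[Var[ψ|S]])⁻¹ E[Cov[(1/π₁)Ỹ(1,π₂)+(1/(1−π₁))Ỹ(0,0), ψ|S]]·E[N]`
and `Y*(z,h) = Ỹ(z,h) − (ψ − E[ψ])'β/E[N]`, the adjusted asymptotic variance satisfies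
`V(Y*) = V(Ỹ) − κ²` with `κ² = (1/(π₁(1−π₁)))·(1/E[N]²)·E[Var[ψ'β|S]] ≥ 0`,
hence `V(Y*) ≤ V(Ỹ)`. -/
theorem covariate_adjustment_variance_improvement {Ω : Type*} {mΩ : MeasurableSpace Ω}
    (μ : Measure Ω) [IsProbabilityMeasure μ]
    (m : MeasurableSpace Ω) (hm : m ≤ mΩ)
    (π₁ : ℝ) (hπ : π₁ ∈ Set.Ioo (0 : ℝ) 1)
    {d : ℕ} (ψ : Ω → Fin d → ℝ) (T1 T0 N : Ω → ℝ)
    (hT1 : MemLp T1 2 μ) (hT0 : MemLp T0 2 μ)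
    (hψ : ∀ i, MemLp (fun ω => ψ ω i) 2 μ)
    (hN : Integrable N μ) (hEN : 0 < ∫ x, N x ∂μ)
    (hdet : IsUnit (condCovMat μ m ψ).det) :
    let EN := ∫ x, N x ∂μ
    let W := fun ω => (1/π₁) * T1 ω + (1/(1-π₁)) * T0 ω
    let β := (π₁*(1-π₁)*EN) • ((condCovMat μ m ψ)⁻¹ *ᵥ condCovVec μ m W ψ)
    let ψβ := fun ω => ∑ i, ψ ω i * β i
    let Y1s := fun ω => T1 ω - (∑ i, (ψ ω i - ∫ x, ψ x i ∂μ) * β i) / EN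
    let Y0s := fun ω => T0 ω - (∑ i, (ψ ω i - ∫ x, ψ x i ∂μ) * β i) / EN
    let κ2 := (1/(π₁*(1-π₁))) * (1/EN^2) * ∫ ω, (ψβ ω - (μ[ψβ|m]) ω)^2 ∂μ
    Vnotau μ m π₁ Y1s Y0s = Vnotau μ m π₁ T1 T0 - κ2 ∧
    0 ≤ κ2 ∧
    Vnotau μ m π₁ Y1s Y0s ≤ Vnotau μ m π₁ T1 T0 := by
  intro EN W β ψβ Y1s Y0s κ2
  obtain ⟨hπ0, hπ1⟩ := hπ
  have hπ1' : 0 < 1 - π₁ := by linarith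
  have hp0 : π₁ ≠ 0 := ne_of_gt hπ0
  have h10 : (1:ℝ) - π₁ ≠ 0 := ne_of_gt hπ1'
  have hENne : EN ≠ 0 := ne_of_gt hEN
  -- membership facts
  have hψβ : MemLp ψβ 2 μ := by
    have h1 : ∀ i ∈ Finset.univ, MemLp (fun ω => ψ ω i * β i) 2 μ := by
      intro i _
      simpa [mul_comm] using (hψ i).const_mul (β i)
    have h2 := memLp_finsetSum' Finset.univ h1
    have h3 : (∑ i : Fin d, fun ω => ψ ω i * β i) = ψβ := by
      funext ω; simp [ψβ]
    rwa [h3] at h2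
  have iψβ : Integrable ψβ μ := hψβ.integrable one_le_two
  have hcψ : ∀ i, MemLp (μ[fun ω => ψ ω i|m]) 2 μ := fun i => memℒp_two_condexp hm (hψ i)
  set g' : Ω → ℝ := fun ω => (∑ i, (ψ ω i - ∫ x, ψ x i ∂μ) * β i) / EN with hg'def
  have hg' : MemLp g' 2 μ := by
    have h1 : ∀ i ∈ Finset.univ, MemLp (fun ω => (ψ ω i - ∫ x, ψ x i ∂μ) * β i) 2 μ := by
      intro i _
      refine (((hψ i).sub (memLp_const (∫ x, ψ x i ∂μ))).const_mul (β i)).ae_eq ?_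
      exact Filter.Eventually.of_forall fun ω => by simp [Pi.sub_apply]; ring
    have h2 := memLp_finsetSum' Finset.univ h1
    have h3 : (∑ i : Fin d, fun ω => (ψ ω i - ∫ x, ψ x i ∂μ) * β i)
        = fun ω => ∑ i, (ψ ω i - ∫ x, ψ x i ∂μ) * β i := by
      funext ω; simp
    rw [h3] at h2
    have h4 : g' = fun ω => EN⁻¹ * ∑ i, (ψ ω i - ∫ x, ψ x i ∂μ) * β i := by
      funext ω; simp only [hg'def]; rw [div_eq_inv_mul]
    rw [h4]
    exact h2.const_mul _
  -- conditional expectation of ψβ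
  have iψi : ∀ i : Fin d, Integrable (fun ω => ψ ω i * β i) μ := fun i => by
    simpa [mul_comm] using ((hψ i).integrable one_le_two).const_mul (β i)
  have ceψβ : μ[ψβ|m] =ᵐ[μ] fun ω => ∑ i, (μ[fun ω => ψ ω i|m]) ω * β i := by
    have h3 : ψβ = ∑ i : Fin d, fun ω => ψ ω i * β i := by funext ω; simp [ψβ]
    have h4 := condExp_finsetSum (μ := μ) (m := m)
      (f := fun (i : Fin d) => fun ω => ψ ω i * β i) (s := Finset.univ) (fun i _ => iψi i)
    rw [← h3] at h4
    refine h4.trans ?_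
    have h5 : ∀ i : Fin d, μ[fun ω => ψ ω i * β i|m]
        =ᵐ[μ] fun ω => (μ[fun ω => ψ ω i|m]) ω * β i := by
      intro i
      have h6 : μ[fun ω => ψ ω i * β i|m] =ᵐ[μ] μ[fun ω => β i * ψ ω i|m] :=
        condExp_congr_ae (Filter.Eventually.of_forall fun ω => mul_comm _ _)
      refine h6.trans ?_
      have h7 := condExp_smul (μ := μ) (m := m) (β i) (fun ω => ψ ω i)
      refine h7.trans ?_
      exact Filter.Eventually.of_forall fun ω => by simp [mul_comm]
    have h9 : ∀ᵐ ω ∂μ, ∀ i : Fin d, (μ[fun ω => ψ ω i * β i|m]) ω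
        = (μ[fun ω => ψ ω i|m]) ω * β i := ae_all_iff.mpr h5
    filter_upwards [h9] with ω hω
    rw [Finset.sum_apply]
    exact Finset.sum_congr rfl fun i _ => hω i
  -- centered version of gʹ
  have hg'aff : g' = fun ω => (1/EN) * ψβ ω
      + (-(1/EN) * (∑ i, (∫ x, ψ x i ∂μ) * β i)) := by
    funext ω
    have hsum : ∑ i, (ψ ω i - ∫ x, ψ x i ∂μ) * β i
        = ψβ ω - ∑ i, (∫ x, ψ x i ∂μ) * β i := by
      rw [show ψβ ω = ∑ i, ψ ω i * β i from rfl, ← Finset.sum_sub_distrib]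
      exact Finset.sum_congr rfl fun i _ => by ring
    simp only [hg'def]
    rw [hsum, div_eq_inv_mul]
    ring
  have hcent : (fun ω => g' ω - (μ[g'|m]) ω)
      =ᵐ[μ] fun ω => (1/EN) * (ψβ ω - (μ[ψβ|m]) ω) := by
    rw [hg'aff]
    exact centered_smul_add_const hm iψβ (1/EN) _
  -- middle term reduction
  have hWmem : MemLp W 2 μ := (hT1.const_mul _).add (hT0.const_mul _)
  have hcW : MemLp (μ[W|m]) 2 μ := memℒp_two_condexp hm hWmem
  have hDWmid : ∫ ω, (W ω - (μ[W|m]) ω) * (g' ω - (μ[g'|m]) ω) ∂μ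
      = (1/EN) * ∫ ω, (W ω - (μ[W|m]) ω) * (ψβ ω - (μ[ψβ|m]) ω) ∂μ := by
    rw [← integral_const_mul]
    apply integral_congr_ae
    filter_upwards [hcent] with ω e
    have e' : g' ω - (μ[g'|m]) ω = (1/EN) * (ψβ ω - (μ[ψβ|m]) ω) := e
    rw [e']; ring
  have hDWψβ : ∫ ω, (W ω - (μ[W|m]) ω) * (ψβ ω - (μ[ψβ|m]) ω) ∂μ
      = ∑ i, β i * condCovVec μ m W ψ i := by
    have iterm : ∀ i ∈ Finset.univ, Integrable (fun ω => β i * ((W ω - (μ[W|m]) ω)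
        * (ψ ω i - (μ[fun ω => ψ ω i|m]) ω))) μ := fun i _ =>
      (integrable_mul_of_memℒp_two (hWmem.sub hcW) ((hψ i).sub (hcψ i))).const_mul _
    calc ∫ ω, (W ω - (μ[W|m]) ω) * (ψβ ω - (μ[ψβ|m]) ω) ∂μ
        = ∫ ω, ∑ i, β i * ((W ω - (μ[W|m]) ω)
            * (ψ ω i - (μ[fun ω => ψ ω i|m]) ω)) ∂μ := by
          apply integral_congr_ae
          filter_upwards [ceψβ] with ω e
          have e' : (μ[ψβ|m]) ω = ∑ i, (μ[fun ω => ψ ω i|m]) ω * β i := e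
          rw [show ψβ ω = ∑ i, ψ ω i * β i from rfl, e', ← Finset.sum_sub_distrib,
            Finset.mul_sum]
          exact Finset.sum_congr rfl fun i _ => by ring
      _ = ∑ i, ∫ ω, β i * ((W ω - (μ[W|m]) ω)
            * (ψ ω i - (μ[fun ω => ψ ω i|m]) ω)) ∂μ := integral_finset_sum Finset.univ iterm
      _ = _ := by
          refine Finset.sum_congr rfl fun i _ => ?_
          rw [integral_const_mul]
          rfl
  -- quadratic form reduction
  have hDGG : ∫ ω, (ψβ ω - (μ[ψβ|m]) ω)^2 ∂μ
      = ∑ i, ∑ j, (β i * β j) * ((condCovMat μ m ψ) i j) := by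
    have iterm : ∀ (i j : Fin d), Integrable (fun ω => (β i * β j)
        * ((ψ ω i - (μ[fun ω => ψ ω i|m]) ω) * (ψ ω j - (μ[fun ω => ψ ω j|m]) ω))) μ :=
      fun i j =>
        (integrable_mul_of_memℒp_two ((hψ i).sub (hcψ i)) ((hψ j).sub (hcψ j))).const_mul _
    calc ∫ ω, (ψβ ω - (μ[ψβ|m]) ω)^2 ∂μ
        = ∫ ω, ∑ i, ∑ j, (β i * β j) * ((ψ ω i - (μ[fun ω => ψ ω i|m]) ω)
            * (ψ ω j - (μ[fun ω => ψ ω j|m]) ω)) ∂μ := by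
          apply integral_congr_ae
          filter_upwards [ceψβ] with ω e
          have e' : (μ[ψβ|m]) ω = ∑ i, (μ[fun ω => ψ ω i|m]) ω * β i := e
          rw [show ψβ ω = ∑ i, ψ ω i * β i from rfl, e', ← Finset.sum_sub_distrib, pow_two,
            Finset.sum_mul_sum]
          refine Finset.sum_congr rfl fun i _ => Finset.sum_congr rfl fun j _ => by ring
      _ = ∑ i, ∫ ω, ∑ j, (β i * β j) * ((ψ ω i - (μ[fun ω => ψ ω i|m]) ω)
            * (ψ ω j - (μ[fun ω => ψ ω j|m]) ω)) ∂μ :=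
          integral_finset_sum Finset.univ fun i _ => integrable_finset_sum _ fun j _ => iterm i j
      _ = ∑ i, ∑ j, ∫ ω, (β i * β j) * ((ψ ω i - (μ[fun ω => ψ ω i|m]) ω)
            * (ψ ω j - (μ[fun ω => ψ ω j|m]) ω)) ∂μ :=
          Finset.sum_congr rfl fun i _ => integral_finset_sum Finset.univ fun j _ => iterm i j
      _ = _ := by
          refine Finset.sum_congr rfl fun i _ => Finset.sum_congr rfl fun j _ => ?_
          rw [integral_const_mul]
          rfl
  have hDg'2 : ∫ ω, (g' ω - (μ[g'|m]) ω)^2 ∂μ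
      = (1/EN)^2 * ∫ ω, (ψβ ω - (μ[ψβ|m]) ω)^2 ∂μ := by
    rw [← integral_const_mul]
    apply integral_congr_ae
    filter_upwards [hcent] with ω e
    have e' : g' ω - (μ[g'|m]) ω = (1/EN) * (ψβ ω - (μ[ψβ|m]) ω) := e
    rw [e']; ring
  -- matrix projection identity
  have hMβ : condCovMat μ m ψ *ᵥ β = (π₁*(1-π₁)*EN) • condCovVec μ m W ψ := by
    show condCovMat μ m ψ *ᵥ ((π₁*(1-π₁)*EN) • ((condCovMat μ m ψ)⁻¹ *ᵥ condCovVec μ m W ψ))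
      = _
    rw [Matrix.mulVec_smul, Matrix.mulVec_mulVec, Matrix.mul_nonsing_inv _ hdet,
      Matrix.one_mulVec]
  have hQS : ∑ i, ∑ j, (β i * β j) * ((condCovMat μ m ψ) i j)
      = (π₁*(1-π₁)*EN) * ∑ i, β i * condCovVec μ m W ψ i := by
    have h1 : ∑ i, ∑ j, (β i * β j) * ((condCovMat μ m ψ) i j)
        = β ⬝ᵥ (condCovMat μ m ψ *ᵥ β) := by
      simp only [dotProduct, Matrix.mulVec, Finset.mul_sum]
      exact Finset.sum_congr rfl fun i _ => Finset.sum_congr rfl fun j _ => by ring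
    rw [h1, hMβ]
    rw [dotProduct_smul]
    rw [show β ⬝ᵥ condCovVec μ m W ψ = ∑ i, β i * condCovVec μ m W ψ i from rfl]
    simp [smul_eq_mul]
  -- assemble
  have hmain := Vnotau_sub (μ := μ) hm ⟨hπ0, hπ1⟩ T1 T0 g' hT1 hT0 hg'
  have hWl : (fun ω => (1/π₁) * T1 ω + (1/(1-π₁)) * T0 ω) = W := rfl
  have hY1 : (fun ω => T1 ω - g' ω) = Y1s := rfl
  have hY0 : (fun ω => T0 ω - g' ω) = Y0s := rfl
  rw [hWl, hY1, hY0] at hmain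
  have hQ : ∫ ω, (ψβ ω - (μ[ψβ|m]) ω)^2 ∂μ
      = (π₁*(1-π₁)*EN) * ∑ i, β i * condCovVec μ m W ψ i := by rw [hDGG, hQS]
  have key : Vnotau μ m π₁ Y1s Y0s = Vnotau μ m π₁ T1 T0 - κ2 := by
    rw [hmain, hDWmid, hDWψβ, hDg'2]
    rw [show κ2 = (1/(π₁*(1-π₁))) * (1/EN^2) * ∫ ω, (ψβ ω - (μ[ψβ|m]) ω)^2 ∂μ from rfl]
    rw [hQ]
    field_simp
    ring
  have hκnn : 0 ≤ κ2 := by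
    rw [show κ2 = (1/(π₁*(1-π₁))) * (1/EN^2) * ∫ ω, (ψβ ω - (μ[ψβ|m]) ω)^2 ∂μ from rfl]
    have hQnn : 0 ≤ ∫ ω, (ψβ ω - (μ[ψβ|m]) ω)^2 ∂μ := integral_nonneg fun ω => sq_nonneg _
    have hpp : 0 < π₁ * (1 - π₁) := mul_pos hπ0 hπ1'
    have h1 : (0:ℝ) ≤ 1/(π₁*(1-π₁)) := le_of_lt (by positivity)
    have h2 : (0:ℝ) ≤ 1/EN^2 := le_of_lt (by positivity)
    exact mul_nonneg (mul_nonneg h1 h2) hQnn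
  exact ⟨key, hκnn, by rw [key]; linarith⟩
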